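/- arXiv:1310.3031 — 2 statements merged into one kernel-verified Lean document; each statement's English description precedes it below -/
import Mathlib

section
/- Let G be a finite simple connected graph with smallest degree d_min and largest degree d_max, Laplacian matrix L = Diag(d) − A with algebraic connectivity a(G) = λ₂(L) (second smallest Laplacian eigenvalue), and let G₀ be the complete weighted graph on the same vertices with edge weights ω₀(ij) = d_i d_j / vol G, with Laplacian L₀ = Diag(d) − d d^T/vol G and algebraic connectivity a(G₀). Then d_min − a(G) ≤ a(G₀) − a(G) ≤ m(G) ≤ d_max − a(G). -/
open Matrix Finset

variable {n : ℕ}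

/-- The real-valued degree of a vertex. -/
noncomputable def degR (G : SimpleGraph (Fin n)) [DecidableRel G.Adj] (i : Fin n) : ℝ :=
  (G.degree i : ℝ)

/-- The volume of the graph: the sum of all degrees. -/
noncomputable def volG (G : SimpleGraph (Fin n)) [DecidableRel G.Adj] : ℝ :=
  ∑ i, degR G i

/-- The modularity matrix `M = A - d dᵀ / vol G`. -/
noncomputable def modM (G : SimpleGraph (Fin n)) [DecidableRel G.Adj] :
    Matrix (Fin n) (Fin n) ℝ :=
  G.adjMatrix ℝ - (volG G)⁻¹ • Matrix.vecMulVec (degR G) (degR G)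

/-- The Laplacian `L₀ = Diag(d) - d dᵀ / vol G` of the complete weighted graph `G₀`
with weights `ω₀(ij) = d_i d_j / vol G`. -/
noncomputable def lap0 (G : SimpleGraph (Fin n)) [DecidableRel G.Adj] :
    Matrix (Fin n) (Fin n) ℝ :=
  Matrix.diagonal (degR G) - (volG G)⁻¹ • Matrix.vecMulVec (degR G) (degR G)

/-- The minimum of the Rayleigh quotient `xᵀXx/xᵀx` over nonzero vectors `x ⊥ 𝟙`.
For a Laplacian matrix `L` this is the algebraic connectivity `a(G) = λ₂(L)`. -/
noncomputable def rayleighMin (X : Matrix (Fin n) (Fin n) ℝ) : ℝ :=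
  sInf {r : ℝ | ∃ x : Fin n → ℝ, x ≠ 0 ∧ (∑ i, x i) = 0 ∧
    r = (x ⬝ᵥ (X *ᵥ x)) / (x ⬝ᵥ x)}

/-- The algebraic modularity `m(G) = max { xᵀMx / xᵀx : x ≠ 0, xᵀ𝟙 = 0 }`. -/
noncomputable def algMod (G : SimpleGraph (Fin n)) [DecidableRel G.Adj] : ℝ :=
  sSup {r : ℝ | ∃ x : Fin n → ℝ, x ≠ 0 ∧ (∑ i, x i) = 0 ∧
    r = (x ⬝ᵥ (modM G *ᵥ x)) / (x ⬝ᵥ x)}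

/-- The common admissible set. -/
def rset (X : Matrix (Fin n) (Fin n) ℝ) : Set ℝ :=
  {r : ℝ | ∃ x : Fin n → ℝ, x ≠ 0 ∧ (∑ i, x i) = 0 ∧
    r = (x ⬝ᵥ (X *ᵥ x)) / (x ⬝ᵥ x)}

lemma rayleighMin_def (X : Matrix (Fin n) (Fin n) ℝ) : rayleighMin X = sInf (rset X) := rfl

lemma algMod_def (G : SimpleGraph (Fin n)) [DecidableRel G.Adj] :
    algMod G = sSup (rset (modM G)) := rfl

lemma lap0_eq (G : SimpleGraph (Fin n)) [DecidableRel G.Adj] :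
    lap0 G = modM G + G.lapMatrix ℝ := by
  unfold lap0 modM SimpleGraph.lapMatrix SimpleGraph.degMatrix degR
  abel

lemma quad_lap0 (G : SimpleGraph (Fin n)) [DecidableRel G.Adj] (x : Fin n → ℝ) :
    x ⬝ᵥ (lap0 G *ᵥ x) =
      (∑ i, degR G i * x i ^ 2) - (∑ i, degR G i * x i)^2 / volG G := by
  rw [lap0, sub_mulVec, dotProduct_sub, smul_mulVec, dotProduct_smul, div_eq_mul_inv]
  congr 1
  · simp only [dotProduct, mulVec_diagonal]
    exact Finset.sum_congr rfl fun i _ => by ring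
  · rw [smul_eq_mul, mul_comm, sq]
    congr 1
    simp only [dotProduct, mulVec, vecMulVec_apply, Finset.sum_mul, Finset.mul_sum]
    rw [Finset.sum_comm]
    exact Finset.sum_congr rfl fun i _ => Finset.sum_congr rfl fun j _ => by ring

lemma quad_lap_nonneg (G : SimpleGraph (Fin n)) [DecidableRel G.Adj] (x : Fin n → ℝ) :
    0 ≤ x ⬝ᵥ (G.lapMatrix ℝ *ᵥ x) := by
  have := (SimpleGraph.posSemidef_lapMatrix ℝ G).dotProduct_mulVec_nonneg x
  simpa using this

lemma dot_self_pos {x : Fin n → ℝ} (hx : x ≠ 0) : 0 < x ⬝ᵥ x := by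
  have h1 : 0 ≤ x ⬝ᵥ x := Finset.sum_nonneg fun i _ => mul_self_nonneg (x i)
  rcases h1.lt_or_eq with h | h
  · exact h
  · exact absurd (dotProduct_self_eq_zero.mp h.symm) hx

lemma rset_nonempty (hn : 2 ≤ n) (X : Matrix (Fin n) (Fin n) ℝ) : (rset X).Nonempty := by
  set i0 : Fin n := ⟨0, by omega⟩
  set i1 : Fin n := ⟨1, by omega⟩
  have hne : i0 ≠ i1 := by simp [i0, i1, Fin.ext_iff]
  set x : Fin n → ℝ := Pi.single i0 1 - Pi.single i1 1 with hxdef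
  refine ⟨_, x, ?_, ?_, rfl⟩
  · intro h
    have := congrFun h i0
    simp [hxdef, Pi.single_apply, hne] at this
  · simp [hxdef, Finset.sum_sub_distrib, Finset.sum_pi_single]

section main
variable (G : SimpleGraph (Fin n)) [DecidableRel G.Adj]

lemma degR_nonneg (i : Fin n) : 0 ≤ degR G i := Nat.cast_nonneg _

lemma dmin_le (i : Fin n) : sInf (Set.range (degR G)) ≤ degR G i :=
  csInf_le (Set.Finite.bddBelow (Set.finite_range _)) ⟨i, rfl⟩

lemma le_dmax (i : Fin n) : degR G i ≤ sSup (Set.range (degR G)) :=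
  le_csSup (Set.Finite.bddAbove (Set.finite_range _)) ⟨i, rfl⟩

lemma dmin_nonneg [Nonempty (Fin n)] : 0 ≤ sInf (Set.range (degR G)) :=
  le_csInf (Set.range_nonempty _) (by rintro r ⟨i, rfl⟩; exact degR_nonneg G i)

lemma quad_lap0_lower (hvol : 0 < volG G) {x : Fin n → ℝ} (hs : (∑ i, x i) = 0) :
    sInf (Set.range (degR G)) * (x ⬝ᵥ x) ≤ x ⬝ᵥ (lap0 G *ᵥ x) := by
  have _ : Nonempty (Fin n) := by
    by_contra h
    simp only [not_nonempty_iff] at h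
    simp [volG, Finset.univ_eq_empty] at hvol
  set δ := sInf (Set.range (degR G)) with hδ
  have hδ0 : 0 ≤ δ := dmin_nonneg G
  set e : Fin n → ℝ := fun i => degR G i - δ with he
  have he0 : ∀ i, 0 ≤ e i := fun i => sub_nonneg.mpr (dmin_le G i)
  rw [quad_lap0]
  have key1 : (∑ i, degR G i * x i) = ∑ i, e i * x i := by
    rw [← sub_eq_zero, ← Finset.sum_sub_distrib]
    have : ∀ i ∈ Finset.univ, degR G i * x i - e i * x i = δ * x i := fun i _ => by
      simp [he]; ring
    rw [Finset.sum_congr rfl this, ← Finset.mul_sum, hs, mul_zero]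
  have key2 : (∑ i, degR G i * x i ^ 2) = δ * (x ⬝ᵥ x) + ∑ i, e i * x i ^ 2 := by
    rw [dotProduct, Finset.mul_sum, ← Finset.sum_add_distrib]
    exact Finset.sum_congr rfl fun i _ => by simp [he]; ring
  have hCS : (∑ i, e i * x i) ^ 2 ≤ (∑ i, e i) * ∑ i, e i * x i ^ 2 :=
    Finset.sum_sq_le_sum_mul_sum_of_sq_eq_mul _ (fun i _ => he0 i)
      (fun i _ => mul_nonneg (he0 i) (sq_nonneg _)) (fun i _ => by ring)
  have hesum : (∑ i, e i) ≤ volG G := by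
    rw [volG]
    apply Finset.sum_le_sum
    intro i _
    simp [he, hδ0]
  have hg0 : 0 ≤ ∑ i, e i * x i ^ 2 :=
    Finset.sum_nonneg fun i _ => mul_nonneg (he0 i) (sq_nonneg _)
  have hdiv : (∑ i, degR G i * x i) ^ 2 / volG G ≤ ∑ i, e i * x i ^ 2 := by
    rw [key1, div_le_iff₀ hvol]
    calc (∑ i, e i * x i) ^ 2 ≤ (∑ i, e i) * ∑ i, e i * x i ^ 2 := hCS
    _ ≤ volG G * ∑ i, e i * x i ^ 2 := mul_le_mul_of_nonneg_right hesum hg0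
    _ = (∑ i, e i * x i ^ 2) * volG G := mul_comm _ _
  linarith [key2]

lemma quad_lap0_upper (hvol : 0 ≤ volG G) (x : Fin n → ℝ) :
    x ⬝ᵥ (lap0 G *ᵥ x) ≤ sSup (Set.range (degR G)) * (x ⬝ᵥ x) := by
  rw [quad_lap0]
  have h1 : 0 ≤ (∑ i, degR G i * x i) ^ 2 / volG G := div_nonneg (sq_nonneg _) hvol
  have h2 : (∑ i, degR G i * x i ^ 2) ≤ sSup (Set.range (degR G)) * (x ⬝ᵥ x) := by
    rw [dotProduct, Finset.mul_sum]
    apply Finset.sum_le_sum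
    intro i _
    have := le_dmax G i
    have hx2 : (0:ℝ) ≤ x i * x i := mul_self_nonneg _
    calc degR G i * x i ^ 2 ≤ sSup (Set.range (degR G)) * x i ^ 2 :=
          mul_le_mul_of_nonneg_right this (sq_nonneg _)
    _ = sSup (Set.range (degR G)) * (x i * x i) := by ring
  linarith

end main

lemma quad_split (G : SimpleGraph (Fin n)) [DecidableRel G.Adj] (x : Fin n → ℝ) :
    x ⬝ᵥ (lap0 G *ᵥ x) = x ⬝ᵥ (modM G *ᵥ x) + x ⬝ᵥ (G.lapMatrix ℝ *ᵥ x) := by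
  rw [lap0_eq, add_mulVec, dotProduct_add]

lemma rset_one_empty (X : Matrix (Fin 1) (Fin 1) ℝ) : rset X = ∅ := by
  ext r
  simp only [rset, Set.mem_setOf_eq, Set.mem_empty_iff_false, iff_false, not_exists]
  rintro x ⟨hx, hs, -⟩
  apply hx
  funext i
  have hi : i = 0 := Subsingleton.elim _ _
  rw [hi, ← Fin.sum_univ_one x, hs, Pi.zero_apply]

/-- `d_min - a(G) ≤ a(G₀) - a(G) ≤ m(G) ≤ d_max - a(G)`, where `a(G)` and `a(G₀)`
are the algebraic connectivities of `G` and of the Chung-Lu "average graph" `G₀`,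
and `d_min`, `d_max` are the smallest and largest degrees of `G`. -/
theorem algMod_between (G : SimpleGraph (Fin n)) [DecidableRel G.Adj]
    (hG : G.Connected) :
    sInf (Set.range (degR G)) - rayleighMin (G.lapMatrix ℝ) ≤
        rayleighMin (lap0 G) - rayleighMin (G.lapMatrix ℝ) ∧
    rayleighMin (lap0 G) - rayleighMin (G.lapMatrix ℝ) ≤ algMod G ∧
    algMod G ≤ sSup (Set.range (degR G)) - rayleighMin (G.lapMatrix ℝ) := by
  classical
  have hne : Nonempty (Fin n) := hG.nonempty
  have hn0 : 0 < n := Fin.pos_iff_nonempty.mpr hne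
  rcases eq_or_lt_of_le (show 1 ≤ n from hn0) with h1 | hn
  · -- n = 1
    obtain rfl : n = 1 := h1.symm
    have hdeg0 : ∀ i : Fin 1, degR G i = 0 := by
      intro i
      have hnb : G.neighborFinset i = ∅ := by
        ext j
        simp only [SimpleGraph.mem_neighborFinset, Finset.notMem_empty, iff_false]
        intro h
        exact G.irrefl ((Subsingleton.elim j i) ▸ h)
      simp [degR, ← SimpleGraph.card_neighborFinset_eq_degree, hnb]
    have hrange : Set.range (degR G) = {0} := by
      ext r
      simp only [Set.mem_range, Set.mem_singleton_iff]
      constructor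
      · rintro ⟨i, rfl⟩; exact hdeg0 i
      · rintro rfl; exact ⟨0, hdeg0 0⟩
    rw [rayleighMin_def, rayleighMin_def, algMod_def, rset_one_empty, rset_one_empty,
      rset_one_empty, hrange]
    simp [Real.sInf_empty, Real.sSup_empty]
  · -- 2 ≤ n
    have hn2 : 2 ≤ n := hn
    have : Nontrivial (Fin n) := Fin.nontrivial_iff_two_le.mpr hn2
    have hdeg : ∀ v : Fin n, 0 < G.degree v := by
      intro v
      rw [SimpleGraph.degree_pos_iff_exists_adj]
      obtain ⟨w, hw⟩ := exists_ne v
      obtain ⟨p⟩ := hG.preconnected v w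
      have hp : ¬ p.Nil := SimpleGraph.Walk.not_nil_of_ne (Ne.symm hw)
      obtain ⟨u, h, -, -⟩ := SimpleGraph.Walk.not_nil_iff.mp hp
      exact ⟨u, h⟩
    have hvol : 0 < volG G :=
      Finset.sum_pos (fun i _ => by unfold degR; exact_mod_cast hdeg i) Finset.univ_nonempty
    set δ := sInf (Set.range (degR G)) with hδ
    set Δ := sSup (Set.range (degR G)) with hΔ
    set L := G.lapMatrix ℝ with hL
    -- basic facts about the three sets
    have hSLne : (rset L).Nonempty := rset_nonempty hn2 L
    have hS0ne : (rset (lap0 G)).Nonempty := rset_nonempty hn2 _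
    have hSMne : (rset (modM G)).Nonempty := rset_nonempty hn2 _
    have hSLlb : ∀ r ∈ rset L, 0 ≤ r := by
      rintro r ⟨x, hx, hs, rfl⟩
      exact div_nonneg (quad_lap_nonneg G x) (dot_self_pos hx).le
    have hSLbdd : BddBelow (rset L) := ⟨0, hSLlb⟩
    have hS0lb : ∀ r ∈ rset (lap0 G), δ ≤ r := by
      rintro r ⟨x, hx, hs, rfl⟩
      rw [le_div_iff₀ (dot_self_pos hx)]
      exact quad_lap0_lower G hvol hs
    have hS0bdd : BddBelow (rset (lap0 G)) := ⟨δ, hS0lb⟩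
    have hS0ub : ∀ r ∈ rset (lap0 G), r ≤ Δ := by
      rintro r ⟨x, hx, hs, rfl⟩
      rw [div_le_iff₀ (dot_self_pos hx)]
      exact quad_lap0_upper G hvol.le x
    have hSMub : ∀ r ∈ rset (modM G), r ≤ Δ - sInf (rset L) := by
      rintro r ⟨x, hx, hs, rfl⟩
      have hxx := dot_self_pos hx
      have hsplit : (x ⬝ᵥ (modM G *ᵥ x)) / (x ⬝ᵥ x) =
          (x ⬝ᵥ (lap0 G *ᵥ x)) / (x ⬝ᵥ x) - (x ⬝ᵥ (L *ᵥ x)) / (x ⬝ᵥ x) := by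
        rw [quad_split, add_div]; ring
      have h1 : (x ⬝ᵥ (lap0 G *ᵥ x)) / (x ⬝ᵥ x) ≤ Δ :=
        hS0ub _ ⟨x, hx, hs, rfl⟩
      have h2 : sInf (rset L) ≤ (x ⬝ᵥ (L *ᵥ x)) / (x ⬝ᵥ x) :=
        csInf_le hSLbdd ⟨x, hx, hs, rfl⟩
      rw [hsplit]
      linarith
    have hSMbdd : BddAbove (rset (modM G)) := ⟨Δ - sInf (rset L), hSMub⟩
    rw [rayleighMin_def, rayleighMin_def, algMod_def]
    refine ⟨?_, ?_, ?_⟩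
    · exact sub_le_sub_right (le_csInf hS0ne hS0lb) _
    · -- sInf (rset lap0) - sInf (rset L) ≤ sSup (rset modM)
      have key : ∀ r ∈ rset L, sInf (rset (lap0 G)) - sSup (rset (modM G)) ≤ r := by
        rintro r ⟨x, hx, hs, rfl⟩
        have h0 : sInf (rset (lap0 G)) ≤ (x ⬝ᵥ (lap0 G *ᵥ x)) / (x ⬝ᵥ x) :=
          csInf_le hS0bdd ⟨x, hx, hs, rfl⟩
        have hm : (x ⬝ᵥ (modM G *ᵥ x)) / (x ⬝ᵥ x) ≤ sSup (rset (modM G)) :=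
          le_csSup hSMbdd ⟨x, hx, hs, rfl⟩
        have hsplit : (x ⬝ᵥ (lap0 G *ᵥ x)) / (x ⬝ᵥ x) =
            (x ⬝ᵥ (modM G *ᵥ x)) / (x ⬝ᵥ x) + (x ⬝ᵥ (L *ᵥ x)) / (x ⬝ᵥ x) := by
          rw [quad_split, add_div]
        linarith
      have := le_csInf hSLne key
      linarith
    · exact le_trans (csSup_le hSMne hSMub) (by rw [hΔ])
end

section
/- Let G be a finite simple connected graph with modularity matrix M and adjacency matrix A, and let u be an eigenvector of M associated to the algebraic modularity m(G), oriented so that d^T u ≥ 0. If m(G) is a simple eigenvalue of M and is not an eigenvalue of A, then u induces exactly one positive strong nodal domain on G. -/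
open Matrix Finset

variable {n : ℕ}

/-- `S` is a positive strong nodal domain of `G` induced by `u`: a maximal
connected subset of `{i : u i > 0}`. -/
def IsPosStrongNodalDomain (G : SimpleGraph (Fin n)) (u : Fin n → ℝ)
    (S : Set (Fin n)) : Prop :=
  S ⊆ {i | 0 < u i} ∧ (G.induce S).Connected ∧
    ∀ T : Set (Fin n), S ⊆ T → T ⊆ {i | 0 < u i} → (G.induce T).Connected → T = S

/-! ### Auxiliary lemmas -/

lemma quad_expand (N : Matrix (Fin n) (Fin n) ℝ) (x y : Fin n → ℝ) :
    x ⬝ᵥ (N *ᵥ y) = ∑ a, ∑ b, x a * (N a b * y b) := by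
  simp [dotProduct, mulVec, Finset.mul_sum]

lemma dot_sym (N : Matrix (Fin n) (Fin n) ℝ) (h : ∀ i j, N i j = N j i)
    (x y : Fin n → ℝ) : x ⬝ᵥ (N *ᵥ y) = y ⬝ᵥ (N *ᵥ x) := by
  rw [quad_expand, quad_expand, Finset.sum_comm]
  refine Finset.sum_congr rfl fun a _ => Finset.sum_congr rfl fun b _ => ?_
  rw [h]; ring

lemma modM_symm (G : SimpleGraph (Fin n)) [DecidableRel G.Adj] (i j : Fin n) :
    modM G i j = modM G j i := by
  simp only [modM, Matrix.sub_apply, Matrix.smul_apply, Matrix.vecMulVec_apply,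
    SimpleGraph.adjMatrix_apply, G.adj_comm i j]
  ring_nf

lemma modM_dot (G : SimpleGraph (Fin n)) [DecidableRel G.Adj] (x y : Fin n → ℝ) :
    x ⬝ᵥ (modM G *ᵥ y)
      = x ⬝ᵥ (G.adjMatrix ℝ *ᵥ y) - (volG G)⁻¹ * ((degR G ⬝ᵥ x) * (degR G ⬝ᵥ y)) := by
  rw [modM, Matrix.sub_mulVec, dotProduct_sub, Matrix.smul_mulVec, dotProduct_smul]
  congr 1
  rw [quad_expand]
  simp only [Matrix.vecMulVec_apply, dotProduct, smul_eq_mul, Finset.sum_mul,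
    Finset.mul_sum]
  rw [Finset.sum_comm]
  refine Finset.sum_congr rfl fun a _ => Finset.sum_congr rfl fun b _ => ?_
  ring

lemma modM_mulVec_one (G : SimpleGraph (Fin n)) [DecidableRel G.Adj]
    (h : volG G ≠ 0) : modM G *ᵥ (fun _ => (1:ℝ)) = 0 := by
  funext i
  have h1 : (G.adjMatrix ℝ *ᵥ (fun _ => (1:ℝ))) i = degR G i := by
    rw [SimpleGraph.adjMatrix_mulVec_apply]
    rw [degR, SimpleGraph.degree, Finset.sum_const, nsmul_eq_mul, mul_one]
  have h2 : (Matrix.vecMulVec (degR G) (degR G) *ᵥ (fun _ => (1:ℝ))) i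
      = degR G i * volG G := by
    simp [Matrix.mulVec, Matrix.vecMulVec_apply, dotProduct, volG, Finset.mul_sum]
  simp only [modM, Matrix.sub_mulVec, Matrix.smul_mulVec, Pi.sub_apply,
    Pi.smul_apply, h1, h2, smul_eq_mul, Pi.zero_apply]
  field_simp
  ring

lemma modM_mulVec' (G : SimpleGraph (Fin n)) [DecidableRel G.Adj] (x : Fin n → ℝ) :
    modM G *ᵥ x = G.adjMatrix ℝ *ᵥ x - ((volG G)⁻¹ * (degR G ⬝ᵥ x)) • degR G := by
  funext i
  rw [modM, Matrix.sub_mulVec, Matrix.smul_mulVec]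
  simp only [Pi.sub_apply, Pi.smul_apply, smul_eq_mul]
  congr 1
  have h : (Matrix.vecMulVec (degR G) (degR G) *ᵥ x) i = degR G i * (degR G ⬝ᵥ x) := by
    simp [Matrix.mulVec, Matrix.vecMulVec_apply, dotProduct, Finset.mul_sum, mul_assoc]
  rw [h]; ring

lemma absmul_le_dot (x : Fin n → ℝ) (i j : Fin n) : |x i * x j| ≤ x ⬝ᵥ x := by
  have h1 : x i * x i ≤ x ⬝ᵥ x :=
    Finset.single_le_sum (f := fun k => x k * x k)
      (fun k _ => mul_self_nonneg _) (Finset.mem_univ i)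
  have h2 : x j * x j ≤ x ⬝ᵥ x :=
    Finset.single_le_sum (f := fun k => x k * x k)
      (fun k _ => mul_self_nonneg _) (Finset.mem_univ j)
  have := abs_mul (x i) (x j)
  nlinarith [sq_nonneg (|x i| - |x j|), sq_abs (x i), sq_abs (x j), abs_nonneg (x i * x j)]

lemma rayleigh_le (G : SimpleGraph (Fin n)) [DecidableRel G.Adj]
    (z : Fin n → ℝ) (hz : (∑ i, z i) = 0) :
    z ⬝ᵥ (modM G *ᵥ z) ≤ algMod G * (z ⬝ᵥ z) := by
  rcases eq_or_ne z 0 with rfl | hz0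
  · simp
  have hden : 0 < z ⬝ᵥ z := by
    rcases lt_or_eq_of_le (Finset.sum_nonneg (fun k _ => mul_self_nonneg (z k))) with h | h
    · exact h
    · exact absurd (dotProduct_self_eq_zero.mp h.symm) hz0
  set C : ℝ := ∑ a, ∑ b, |modM G a b| with hC
  have hbdd : BddAbove {r : ℝ | ∃ x : Fin n → ℝ, x ≠ 0 ∧ (∑ i, x i) = 0 ∧
      r = (x ⬝ᵥ (modM G *ᵥ x)) / (x ⬝ᵥ x)} := by
    refine ⟨C, fun r hr => ?_⟩
    obtain ⟨x, hx0, -, rfl⟩ := hr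
    have hd : 0 < x ⬝ᵥ x := by
      rcases lt_or_eq_of_le (Finset.sum_nonneg (fun k _ => mul_self_nonneg (x k))) with h | h
      · exact h
      · exact absurd (dotProduct_self_eq_zero.mp h.symm) hx0
    rw [div_le_iff₀ hd]
    calc x ⬝ᵥ (modM G *ᵥ x) = ∑ a, ∑ b, x a * (modM G a b * x b) := quad_expand _ _ _
      _ ≤ ∑ a, ∑ b, |modM G a b| * (x ⬝ᵥ x) := by
          refine Finset.sum_le_sum fun a _ => Finset.sum_le_sum fun b _ => ?_
          calc x a * (modM G a b * x b) ≤ |x a * (modM G a b * x b)| := le_abs_self _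
            _ = |modM G a b| * |x a * x b| := by rw [abs_mul, abs_mul, abs_mul]; ring
            _ ≤ |modM G a b| * (x ⬝ᵥ x) :=
                mul_le_mul_of_nonneg_left (absmul_le_dot x a b) (abs_nonneg _)
      _ = C * (x ⬝ᵥ x) := by rw [hC, Finset.sum_mul]; simp [Finset.sum_mul]
  have hmem : (z ⬝ᵥ (modM G *ᵥ z)) / (z ⬝ᵥ z) ∈ {r : ℝ | ∃ x : Fin n → ℝ, x ≠ 0 ∧
      (∑ i, x i) = 0 ∧ r = (x ⬝ᵥ (modM G *ᵥ x)) / (x ⬝ᵥ x)} := ⟨z, hz0, hz, rfl⟩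
  have h := le_csSup hbdd hmem
  rw [div_le_iff₀ hden] at h
  exact h

lemma sum_modM_mulVec (G : SimpleGraph (Fin n)) [DecidableRel G.Adj]
    (hvol : volG G ≠ 0) (y : Fin n → ℝ) : ∑ i, (modM G *ᵥ y) i = 0 := by
  have h : (fun _ => (1:ℝ)) ⬝ᵥ (modM G *ᵥ y) = y ⬝ᵥ (modM G *ᵥ fun _ => (1:ℝ)) :=
    dot_sym _ (modM_symm G) _ _
  simpa [dotProduct, modM_mulVec_one G hvol] using h

lemma shift_dot (G : SimpleGraph (Fin n)) [DecidableRel G.Adj]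
    (hvol : volG G ≠ 0) (y : Fin n → ℝ) (s : ℝ) :
    (y - s • (fun _ => (1:ℝ))) ⬝ᵥ (modM G *ᵥ (y - s • (fun _ => (1:ℝ))))
      = y ⬝ᵥ (modM G *ᵥ y) := by
  have h1 : modM G *ᵥ (y - s • (fun _ => (1:ℝ))) = modM G *ᵥ y := by
    rw [Matrix.mulVec_sub, Matrix.mulVec_smul, modM_mulVec_one G hvol]
    simp
  rw [h1, sub_dotProduct, smul_dotProduct]
  have h2 : (fun _ => (1:ℝ)) ⬝ᵥ (modM G *ᵥ y) = y ⬝ᵥ (modM G *ᵥ (fun _ => (1:ℝ))) :=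
    dot_sym _ (modM_symm G) _ _
  rw [h2, modM_mulVec_one G hvol]
  simp

/-! ### Reachability within the positive part -/

def stepRel (G : SimpleGraph (Fin n)) (u : Fin n → ℝ) : Fin n → Fin n → Prop :=
  fun a b => G.Adj a b ∧ 0 < u a ∧ 0 < u b

lemma stepRel_pos {G : SimpleGraph (Fin n)} {u : Fin n → ℝ} {a k : Fin n}
    (h : Relation.ReflTransGen (stepRel G u) a k) (ha : 0 < u a) : 0 < u k := by
  induction h with
  | refl => exact ha
  | tail _ hstep _ => exact hstep.2.2

lemma stepRel_closure {G : SimpleGraph (Fin n)} {u : Fin n → ℝ} {a k l : Fin n}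
    (h : Relation.ReflTransGen (stepRel G u) a k) (hadj : G.Adj k l)
    (ha : 0 < u a) (hl : 0 < u l) : Relation.ReflTransGen (stepRel G u) a l :=
  h.tail ⟨hadj, stepRel_pos h ha, hl⟩

lemma stepRel_symm {G : SimpleGraph (Fin n)} {u : Fin n → ℝ} :
    Symmetric (stepRel G u) := fun _ _ h => ⟨h.1.symm, h.2.2, h.2.1⟩

lemma reach_in_induce (G : SimpleGraph (Fin n)) (u : Fin n → ℝ) :
    ∀ {a b : Fin n}, Relation.ReflTransGen (stepRel G u) a b →
    ∀ (ha : 0 < u a) (hb : 0 < u b),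
      (G.induce {i | 0 < u i}).Reachable ⟨a, ha⟩ ⟨b, hb⟩ := by
  intro a b h
  induction h with
  | refl => intro _ _; exact SimpleGraph.Reachable.refl _
  | tail _ hstep ih =>
      intro ha hc
      exact (ih ha hstep.2.1).trans
        (SimpleGraph.Adj.reachable (by simpa [SimpleGraph.comap] using hstep.1))

lemma rtg_of_walk (G : SimpleGraph (Fin n)) (u : Fin n → ℝ)
    (hall : ∀ k, 0 < u k) :
    ∀ {a b : Fin n}, G.Walk a b → Relation.ReflTransGen (stepRel G u) a b := by
  intro a b w
  induction w with
  | nil => exact Relation.ReflTransGen.refl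
  | cons h _ ih => exact Relation.ReflTransGen.head ⟨h, hall _, hall _⟩ ih

open scoped Classical in
noncomputable def compVec (G : SimpleGraph (Fin n)) (u : Fin n → ℝ) (a : Fin n) :
    Fin n → ℝ :=
  fun k => if Relation.ReflTransGen (stepRel G u) a k then u k else 0

lemma compVec_nonneg {G : SimpleGraph (Fin n)} {u : Fin n → ℝ} {a : Fin n}
    (ha : 0 < u a) (k : Fin n) : 0 ≤ compVec G u a k := by
  rw [compVec]
  split
  · exact le_of_lt (stepRel_pos (by assumption) ha)
  · exact le_refl 0

lemma compVec_orth (G : SimpleGraph (Fin n)) (u : Fin n → ℝ) {a b : Fin n}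
    (hdisj : ∀ k, Relation.ReflTransGen (stepRel G u) a k →
      Relation.ReflTransGen (stepRel G u) b k → False) :
    compVec G u a ⬝ᵥ compVec G u b = 0 := by
  refine Finset.sum_eq_zero fun k _ => ?_
  by_cases h1 : Relation.ReflTransGen (stepRel G u) a k
  · by_cases h2 : Relation.ReflTransGen (stepRel G u) b k
    · exact (hdisj k h1 h2).elim
    · simp [compVec, h2]
  · simp [compVec, h1]

lemma cross_zero (G : SimpleGraph (Fin n)) [DecidableRel G.Adj] (u : Fin n → ℝ)
    {a b : Fin n} (ha : 0 < u a) (hb : 0 < u b)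
    (hdisj : ∀ k, Relation.ReflTransGen (stepRel G u) a k →
      Relation.ReflTransGen (stepRel G u) b k → False) :
    compVec G u a ⬝ᵥ (G.adjMatrix ℝ *ᵥ compVec G u b) = 0 := by
  rw [quad_expand]
  refine Finset.sum_eq_zero fun i _ => Finset.sum_eq_zero fun j _ => ?_
  by_cases h1 : Relation.ReflTransGen (stepRel G u) a i
  · by_cases h2 : Relation.ReflTransGen (stepRel G u) b j
    · by_cases hadj : G.Adj i j
      · exact (hdisj j (stepRel_closure h1 hadj ha (stepRel_pos h2 hb)) h2).elim
      · simp [SimpleGraph.adjMatrix_apply, hadj]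
    · simp [compVec, h2]
  · simp [compVec, h1]

lemma comp_bound (G : SimpleGraph (Fin n)) [DecidableRel G.Adj] (u : Fin n → ℝ)
    (hvol : 0 < volG G)
    (heig : modM G *ᵥ u = algMod G • u) (hor : 0 ≤ degR G ⬝ᵥ u)
    (a : Fin n) (ha : 0 < u a) :
    algMod G * (compVec G u a ⬝ᵥ compVec G u a)
      ≤ compVec G u a ⬝ᵥ (G.adjMatrix ℝ *ᵥ compVec G u a) := by
  have hvu : compVec G u a ⬝ᵥ u = compVec G u a ⬝ᵥ compVec G u a := by
    refine Finset.sum_congr rfl fun k _ => ?_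
    by_cases h : Relation.ReflTransGen (stepRel G u) a k <;> simp [compVec, h]
  have hM : compVec G u a ⬝ᵥ (modM G *ᵥ u)
      = algMod G * (compVec G u a ⬝ᵥ compVec G u a) := by
    rw [heig, dotProduct_smul, smul_eq_mul, hvu]
  have hMd := modM_dot G (compVec G u a) u
  have hAu_le : compVec G u a ⬝ᵥ (G.adjMatrix ℝ *ᵥ u)
      ≤ compVec G u a ⬝ᵥ (G.adjMatrix ℝ *ᵥ compVec G u a) := by
    have hsub : compVec G u a ⬝ᵥ (G.adjMatrix ℝ *ᵥ u)
        - compVec G u a ⬝ᵥ (G.adjMatrix ℝ *ᵥ compVec G u a)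
        = compVec G u a ⬝ᵥ (G.adjMatrix ℝ *ᵥ (u - compVec G u a)) := by
      rw [Matrix.mulVec_sub, dotProduct_sub]
    have hle : compVec G u a ⬝ᵥ (G.adjMatrix ℝ *ᵥ (u - compVec G u a)) ≤ 0 := by
      rw [quad_expand]
      refine Finset.sum_nonpos fun i _ => Finset.sum_nonpos fun j _ => ?_
      by_cases h1 : Relation.ReflTransGen (stepRel G u) a i
      · by_cases h2 : Relation.ReflTransGen (stepRel G u) a j
        · simp [compVec, h2]
        · by_cases hadj : G.Adj i j
          · have hui : 0 < u i := stepRel_pos h1 ha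
            have huj : u j ≤ 0 := by
              by_contra hpos
              exact h2 (stepRel_closure h1 hadj ha (lt_of_not_ge hpos))
            have e1 : compVec G u a i = u i := by simp [compVec, h1]
            have e2 : compVec G u a j = 0 := by simp [compVec, h2]
            simp only [e1, Pi.sub_apply, e2, SimpleGraph.adjMatrix_apply, if_pos hadj,
              sub_zero, one_mul]
            exact mul_nonpos_of_nonneg_of_nonpos (le_of_lt hui) huj
          · simp [SimpleGraph.adjMatrix_apply, hadj]
      · simp [compVec, h1]
    linarith [hsub ▸ hle]
  have hdv : 0 ≤ degR G ⬝ᵥ compVec G u a :=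
    Finset.sum_nonneg fun k _ => mul_nonneg (Nat.cast_nonneg _) (compVec_nonneg ha k)
  have hnn : 0 ≤ (volG G)⁻¹ * ((degR G ⬝ᵥ compVec G u a) * (degR G ⬝ᵥ u)) :=
    mul_nonneg (inv_nonneg.mpr (le_of_lt hvol)) (mul_nonneg hdv hor)
  linarith [hM, hMd]

lemma ncard_one_of (G : SimpleGraph (Fin n)) (u : Fin n → ℝ)
    (hne : ∃ i, 0 < u i)
    (hR : ∀ i j, 0 < u i → 0 < u j → Relation.ReflTransGen (stepRel G u) i j) :
    {S : Set (Fin n) | IsPosStrongNodalDomain G u S}.ncard = 1 := by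
  obtain ⟨i₀, hi₀⟩ := hne
  have hconn : (G.induce {i | 0 < u i}).Connected := by
    rw [SimpleGraph.connected_iff]
    refine ⟨?_, ⟨⟨i₀, hi₀⟩⟩⟩
    rintro ⟨a, ha⟩ ⟨b, hb⟩
    exact reach_in_induce G u (hR a b ha hb) ha hb
  have hPdom : IsPosStrongNodalDomain G u {i | 0 < u i} :=
    ⟨fun x hx => hx, hconn, fun T hST hTP _ => Set.Subset.antisymm hTP hST⟩
  have hset : {S : Set (Fin n) | IsPosStrongNodalDomain G u S}
      = {({i | 0 < u i} : Set (Fin n))} := by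
    ext S
    simp only [Set.mem_setOf_eq, Set.mem_singleton_iff]
    constructor
    · rintro ⟨hSP, hSc, hSmax⟩
      exact (hSmax {i | 0 < u i} hSP (fun x hx => hx) hconn).symm
    · rintro rfl; exact hPdom
  rw [hset]
  exact Set.ncard_singleton _

/-- If `u` is an eigenvector associated to the algebraic modularity `m(G)`,
oriented so that `dᵀu ≥ 0`, and `m(G)` is a simple eigenvalue of `M` that is not an
eigenvalue of the adjacency matrix `A`, then `u` induces exactly one positive
strong nodal domain. -/
theorem one_positive_nodal_domain (G : SimpleGraph (Fin n))
    [DecidableRel G.Adj] (hG : G.Connected)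
    (u : Fin n → ℝ) (hu : u ≠ 0)
    (heig : modM G *ᵥ u = algMod G • u)
    (hor : 0 ≤ degR G ⬝ᵥ u)
    (hsimple : ∀ v : Fin n → ℝ, modM G *ᵥ v = algMod G • v → ∃ c : ℝ, v = c • u)
    (hnotA : ¬ ∃ v : Fin n → ℝ, v ≠ 0 ∧ G.adjMatrix ℝ *ᵥ v = algMod G • v) :
    {S : Set (Fin n) | IsPosStrongNodalDomain G u S}.ncard = 1 := by
  classical
  by_cases hsmall : n ≤ 1
  · -- tiny graphs: the modularity matrix is the adjacency matrix, contradiction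
    have hdeg : ∀ i : Fin n, degR G i = 0 := by
      intro i
      have hemp : G.neighborFinset i = ∅ := by
        ext j
        simp only [SimpleGraph.mem_neighborFinset, Finset.notMem_empty, iff_false]
        intro hadj
        have hij : i = j := Fin.ext (by omega)
        exact G.irrefl (hij ▸ hadj)
      rw [degR, SimpleGraph.degree, hemp]
      simp
    have hmod : modM G = G.adjMatrix ℝ := by
      rw [modM]
      have hz : Matrix.vecMulVec (degR G) (degR G) = 0 := by
        funext i j; simp [Matrix.vecMulVec_apply, hdeg]
      rw [hz]; simp
    exact absurd ⟨u, hu, by rw [← hmod]; exact heig⟩ hnotA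
  push_neg at hsmall
  have hn2 : 2 ≤ n := hsmall
  haveI hNE : Nonempty (Fin n) := ⟨⟨0, by omega⟩⟩
  have hnR : (0:ℝ) < n := by
    have : 0 < n := by omega
    exact_mod_cast this
  have hdegpos : ∀ i, 0 < degR G i := by
    intro i
    obtain ⟨j, hj⟩ := Fintype.exists_ne_of_one_lt_card (by simp; omega) i
    obtain ⟨w⟩ := hG.preconnected i j
    cases w with
    | nil => exact absurd rfl hj
    | cons h _ =>
        rw [degR]
        exact_mod_cast (G.degree_pos_iff_exists_adj i).mpr ⟨_, h⟩
  have hvolpos : 0 < volG G := Finset.sum_pos (fun i _ => hdegpos i) Finset.univ_nonempty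
  have hvolne : volG G ≠ 0 := ne_of_gt hvolpos
  have hsumu0 : algMod G ≠ 0 → (∑ i, u i) = 0 := by
    intro hne
    have h2 := sum_modM_mulVec G hvolne u
    rw [heig] at h2
    simp only [Pi.smul_apply, smul_eq_mul] at h2
    rw [← Finset.mul_sum] at h2
    rcases mul_eq_zero.mp h2 with h | h
    · exact absurd h hne
    · exact h
  rcases lt_trichotomy (algMod G) 0 with hlam | hlam | hlam
  · -- `algMod G < 0` is impossible
    exfalso
    have hsumu : (∑ i, u i) = 0 := hsumu0 (ne_of_lt hlam)
    by_cases hcomp : ∀ i j : Fin n, i ≠ j → G.Adj i j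
    · -- complete graph: regular, so u is an eigenvector of A
      have hdu : degR G ⬝ᵥ u = 0 := by
        have hdc : ∀ i, degR G i = ((n - 1 : ℕ) : ℝ) := by
          intro i
          rw [degR]
          congr 1
          rw [SimpleGraph.degree]
          have he : G.neighborFinset i = Finset.univ.erase i := by
            ext j
            simp only [SimpleGraph.mem_neighborFinset, Finset.mem_erase, Finset.mem_univ,
              and_true]
            constructor
            · intro h; exact (G.ne_of_adj h).symm
            · intro h; exact hcomp i j (Ne.symm h)
          rw [he, Finset.card_erase_of_mem (Finset.mem_univ i), Finset.card_univ,
            Fintype.card_fin]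
        calc degR G ⬝ᵥ u = ∑ i, ((n-1:ℕ):ℝ) * u i :=
              Finset.sum_congr rfl fun i _ => by rw [hdc]
          _ = ((n-1:ℕ):ℝ) * ∑ i, u i := by rw [Finset.mul_sum]
          _ = 0 := by rw [hsumu, mul_zero]
      apply hnotA
      refine ⟨u, hu, ?_⟩
      have hmv := modM_mulVec' G u
      rw [hdu, mul_zero, zero_smul, sub_zero] at hmv
      rw [← hmv]
      exact heig
    · push_neg at hcomp
      obtain ⟨i, j, hij, hnadj⟩ := hcomp
      set z : Fin n → ℝ := fun k => if k = i then degR G j else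
        (if k = j then - degR G i else 0) with hzdef
      have hzi : z i = degR G j := by simp [hzdef]
      have hzj : z j = - degR G i := by simp [hzdef, Ne.symm hij]
      have hdz : degR G ⬝ᵥ z = 0 := by
        have hterm : ∀ k, degR G k * z k
            = (if k = i then degR G i * degR G j else 0)
              + (if k = j then -(degR G j * degR G i) else 0) := by
          intro k
          by_cases h1 : k = i
          · subst h1; simp [hzdef, hij]
          · by_cases h2 : k = j
            · subst h2; simp [hzdef, h1]
            · simp [hzdef, h1, h2]
        rw [show degR G ⬝ᵥ z = ∑ k, degR G k * z k from rfl,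
          Finset.sum_congr rfl (fun k _ => hterm k), Finset.sum_add_distrib]
        simp [Finset.sum_ite_eq']
        ring
      have hQzz : z ⬝ᵥ (G.adjMatrix ℝ *ᵥ z) = 0 := by
        rw [quad_expand]
        refine Finset.sum_eq_zero fun a _ => Finset.sum_eq_zero fun b _ => ?_
        by_cases hza : z a = 0
        · simp [hza]
        by_cases hzb : z b = 0
        · simp [hzb]
        have ha' : a = i ∨ a = j := by
          by_contra h; push_neg at h
          exact hza (by simp [hzdef, h.1, h.2])
        have hb' : b = i ∨ b = j := by
          by_contra h; push_neg at h
          exact hzb (by simp [hzdef, h.1, h.2])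
        have hA : G.adjMatrix ℝ a b = 0 := by
          rcases ha' with rfl | rfl
          · rcases hb' with rfl | rfl
            · simp
            · simp [SimpleGraph.adjMatrix_apply, hnadj]
          · rcases hb' with rfl | rfl
            · simp only [SimpleGraph.adjMatrix_apply, ite_eq_right_iff]
              intro h; exact absurd h.symm hnadj
            · simp
        rw [hA]; ring
      have hBzz : z ⬝ᵥ (modM G *ᵥ z) = 0 := by
        rw [modM_dot, hQzz, hdz]; ring
      set s : ℝ := (∑ k, z k) / n with hsdef
      have hsumw : ∑ k, (z - s • (fun _ : Fin n => (1:ℝ))) k = 0 := by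
        simp only [Pi.sub_apply, Pi.smul_apply, smul_eq_mul, mul_one]
        rw [Finset.sum_sub_distrib, Finset.sum_const, Finset.card_univ, Fintype.card_fin,
          nsmul_eq_mul, hsdef]
        field_simp
        ring
      have hBww : (z - s • (fun _ : Fin n => (1:ℝ)))
          ⬝ᵥ (modM G *ᵥ (z - s • (fun _ : Fin n => (1:ℝ)))) = 0 := by
        rw [shift_dot G hvolne, hBzz]
      have hup := rayleigh_le G _ hsumw
      rw [hBww] at hup
      have hWnn : 0 ≤ (z - s • (fun _ : Fin n => (1:ℝ)))
          ⬝ᵥ (z - s • (fun _ : Fin n => (1:ℝ))) :=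
        Finset.sum_nonneg fun k _ => mul_self_nonneg _
      have hW0 : (z - s • (fun _ : Fin n => (1:ℝ)))
          ⬝ᵥ (z - s • (fun _ : Fin n => (1:ℝ))) = 0 := by
        rcases lt_or_eq_of_le hWnn with h | h
        · exact absurd hup (not_le.mpr (mul_neg_of_neg_of_pos hlam h))
        · exact h.symm
      have hwz : (z - s • (fun _ : Fin n => (1:ℝ))) = 0 := dotProduct_self_eq_zero.mp hW0
      have hz_eq : ∀ k, z k = s := by
        intro k
        have := congrFun hwz k
        simp only [Pi.sub_apply, Pi.smul_apply, smul_eq_mul, mul_one, Pi.zero_apply] at this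
        linarith
      have h1 : degR G j = s := by rw [← hzi]; exact hz_eq i
      have h2 : - degR G i = s := by rw [← hzj]; exact hz_eq j
      have := hdegpos i
      have := hdegpos j
      linarith
  · -- `algMod G = 0`: `u` is a positive constant vector
    have hone : modM G *ᵥ (fun _ : Fin n => (1:ℝ)) = algMod G • (fun _ : Fin n => (1:ℝ)) := by
      rw [modM_mulVec_one G hvolne, hlam]
      funext k; simp
    obtain ⟨c, hc⟩ := hsimple _ hone
    have hcne : c ≠ 0 := by
      intro h0
      have := congrFun hc ⟨0, by omega⟩
      rw [h0] at this
      simp at this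
    have hui : ∀ k, u k = c⁻¹ := by
      intro k
      have h := congrFun hc k
      simp only [Pi.smul_apply, smul_eq_mul] at h
      field_simp
      linear_combination -h
    have hcpos : 0 < c⁻¹ := by
      have hdot : degR G ⬝ᵥ u = volG G * c⁻¹ := by
        calc degR G ⬝ᵥ u = ∑ k, degR G k * c⁻¹ :=
              Finset.sum_congr rfl fun k _ => by rw [hui]
          _ = (∑ k, degR G k) * c⁻¹ := (Finset.sum_mul _ _ _).symm
          _ = volG G * c⁻¹ := rfl
      have h0 : 0 ≤ volG G * c⁻¹ := hdot ▸ hor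
      rcases (inv_ne_zero hcne).lt_or_gt with h | h
      · nlinarith
      · exact h
    have hall : ∀ k, 0 < u k := fun k => by rw [hui]; exact hcpos
    apply ncard_one_of G u ⟨⟨0, by omega⟩, hall _⟩
    intro a b _ _
    obtain ⟨wk⟩ := hG.preconnected a b
    exact rtg_of_walk G u hall wk
  · -- `algMod G > 0`: the main case
    have hsumu : (∑ i, u i) = 0 := hsumu0 (ne_of_gt hlam)
    have hne : ∃ i, 0 < u i := by
      by_contra h
      push_neg at h
      apply hu
      funext k
      exact (Finset.sum_eq_zero_iff_of_nonpos (fun i _ => h i)).mp hsumu k (Finset.mem_univ k)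
    apply ncard_one_of G u hne
    intro i₀ j₀ hi₀ hj₀
    by_contra hRc
    have hdisj : ∀ k, Relation.ReflTransGen (stepRel G u) i₀ k →
        Relation.ReflTransGen (stepRel G u) j₀ k → False := fun k h1 h2 =>
      hRc (h1.trans (by
        haveI : Std.Symm (stepRel G u) := ⟨fun _ _ h => stepRel_symm h⟩
        exact Std.Symm.symm (r := Relation.ReflTransGen (stepRel G u)) _ _ h2))
    have hv₁i₀ : compVec G u i₀ i₀ = u i₀ := by
      rw [compVec]; exact if_pos Relation.ReflTransGen.refl
    have hv₂i₀ : compVec G u j₀ i₀ = 0 := by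
      rw [compVec]; exact if_neg (fun h => hdisj i₀ Relation.ReflTransGen.refl h)
    have hv₁j₀ : compVec G u i₀ j₀ = 0 := by
      rw [compVec]; exact if_neg hRc
    have hv₂j₀ : compVec G u j₀ j₀ = u j₀ := by
      rw [compVec]; exact if_pos Relation.ReflTransGen.refl
    set p₁ := degR G ⬝ᵥ compVec G u i₀ with hp₁def
    set p₂ := degR G ⬝ᵥ compVec G u j₀ with hp₂def
    have hp₁ : 0 < p₁ := by
      rw [hp₁def]
      refine Finset.sum_pos'
        (fun k _ => mul_nonneg (Nat.cast_nonneg _) (compVec_nonneg hi₀ k))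
        ⟨i₀, Finset.mem_univ _, ?_⟩
      rw [hv₁i₀]
      exact mul_pos (hdegpos i₀) hi₀
    have hp₂ : 0 < p₂ := by
      rw [hp₂def]
      refine Finset.sum_pos'
        (fun k _ => mul_nonneg (Nat.cast_nonneg _) (compVec_nonneg hj₀ k))
        ⟨j₀, Finset.mem_univ _, ?_⟩
      rw [hv₂j₀]
      exact mul_pos (hdegpos j₀) hj₀
    set y : Fin n → ℝ := p₂ • compVec G u i₀ - p₁ • compVec G u j₀ with hydef
    clear_value y
    have happ : ∀ k, y k = p₂ * compVec G u i₀ k - p₁ * compVec G u j₀ k := fun k => by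
      simp [hydef]
    have hyi₀ : y i₀ = p₂ * u i₀ := by rw [happ, hv₁i₀, hv₂i₀]; ring
    have hyj₀ : y j₀ = -p₁ * u j₀ := by rw [happ, hv₁j₀, hv₂j₀]; ring
    have hdy : degR G ⬝ᵥ y = 0 := by
      rw [hydef, dotProduct_sub, dotProduct_smul, dotProduct_smul, ← hp₁def, ← hp₂def]
      simp only [smul_eq_mul]
      ring
    have h12 : compVec G u i₀ ⬝ᵥ compVec G u j₀ = 0 := compVec_orth G u hdisj
    have h21 : compVec G u j₀ ⬝ᵥ compVec G u i₀ = 0 := by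
      rw [dotProduct_comm]; exact h12
    have hQ12 : compVec G u i₀ ⬝ᵥ (G.adjMatrix ℝ *ᵥ compVec G u j₀) = 0 :=
      cross_zero G u hi₀ hj₀ hdisj
    have hQ21 : compVec G u j₀ ⬝ᵥ (G.adjMatrix ℝ *ᵥ compVec G u i₀) = 0 := by
      rw [dot_sym _ (fun a b => by
        rw [SimpleGraph.adjMatrix_apply, SimpleGraph.adjMatrix_apply]
        simp [G.adj_comm a b])]
      exact hQ12
    have hyy : y ⬝ᵥ y = p₂^2 * (compVec G u i₀ ⬝ᵥ compVec G u i₀)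
        + p₁^2 * (compVec G u j₀ ⬝ᵥ compVec G u j₀) := by
      rw [hydef]
      simp only [sub_dotProduct, dotProduct_sub, smul_dotProduct, dotProduct_smul,
        smul_eq_mul]
      rw [h12, h21]
      ring
    have hAy : y ⬝ᵥ (G.adjMatrix ℝ *ᵥ y)
        = p₂^2 * (compVec G u i₀ ⬝ᵥ (G.adjMatrix ℝ *ᵥ compVec G u i₀))
          + p₁^2 * (compVec G u j₀ ⬝ᵥ (G.adjMatrix ℝ *ᵥ compVec G u j₀)) := by
      rw [hydef]
      simp only [Matrix.mulVec_sub, Matrix.mulVec_smul, sub_dotProduct, dotProduct_sub,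
        smul_dotProduct, dotProduct_smul, smul_eq_mul]
      rw [hQ12, hQ21]
      ring
    have hb1 := comp_bound G u hvolpos heig hor i₀ hi₀
    have hb2 := comp_bound G u hvolpos heig hor j₀ hj₀
    have hlow : algMod G * (y ⬝ᵥ y) ≤ y ⬝ᵥ (modM G *ᵥ y) := by
      rw [modM_dot, hdy, mul_zero, mul_zero, sub_zero, hAy, hyy]
      nlinarith [mul_le_mul_of_nonneg_left hb1 (sq_nonneg p₂),
        mul_le_mul_of_nonneg_left hb2 (sq_nonneg p₁)]
    set s : ℝ := (∑ k, y k) / n with hsdef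
    clear_value s
    set z : Fin n → ℝ := y - s • (fun _ : Fin n => (1:ℝ)) with hzdef
    clear_value z
    have hsumz : ∑ k, z k = 0 := by
      simp only [hzdef, Pi.sub_apply, Pi.smul_apply, smul_eq_mul, mul_one]
      rw [Finset.sum_sub_distrib, Finset.sum_const, Finset.card_univ, Fintype.card_fin,
        nsmul_eq_mul, hsdef]
      field_simp
      ring
    have hzM : z ⬝ᵥ (modM G *ᵥ z) = y ⬝ᵥ (modM G *ᵥ y) := by
      rw [hzdef]; exact shift_dot G hvolne y s
    have hone_dot_y : (fun _ : Fin n => (1:ℝ)) ⬝ᵥ y = (n:ℝ) * s := by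
      rw [hsdef]
      have : (fun _ : Fin n => (1:ℝ)) ⬝ᵥ y = ∑ k, y k := by
        simp [dotProduct]
      rw [this]
      field_simp
    have hzz : z ⬝ᵥ z = y ⬝ᵥ y - s^2 * n := by
      rw [hzdef]
      simp only [sub_dotProduct, dotProduct_sub, smul_dotProduct, dotProduct_smul,
        smul_eq_mul]
      have hyo : y ⬝ᵥ (fun _ : Fin n => (1:ℝ)) = (n:ℝ) * s := by
        rw [dotProduct_comm]; exact hone_dot_y
      have hoo : (fun _ : Fin n => (1:ℝ)) ⬝ᵥ (fun _ : Fin n => (1:ℝ)) = (n:ℝ) := by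
        simp [dotProduct]
      rw [hone_dot_y, hyo, hoo]
      ring
    have hupz := rayleigh_le G z hsumz
    have hs0 : s = 0 := by
      rw [hzM, hzz] at hupz
      have hexpand : algMod G * (y ⬝ᵥ y - s^2 * n)
          = algMod G * (y ⬝ᵥ y) - algMod G * (s^2 * n) := by ring
      have h1 : algMod G * (s^2 * n) ≤ 0 := by linarith [hupz, hlow, hexpand]
      have h3 : s^2 * (n:ℝ) ≤ 0 :=
        le_of_not_gt fun hp => absurd (mul_pos hlam hp) (by linarith)
      have h4 : 0 ≤ s^2 * (n:ℝ) := mul_nonneg (sq_nonneg s) (le_of_lt hnR)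
      have h5 : s^2 = 0 :=
        (mul_eq_zero.mp (le_antisymm h3 h4)).resolve_right (ne_of_gt hnR)
      exact pow_eq_zero_iff two_ne_zero |>.mp h5
    have hsumy : ∑ k, y k = 0 := by
      rw [hsdef] at hs0
      field_simp at hs0
      simpa using hs0
    have heqy : y ⬝ᵥ (modM G *ᵥ y) = algMod G * (y ⬝ᵥ y) := by
      rw [hzM, hzz, hs0] at hupz
      apply le_antisymm _ hlow
      calc y ⬝ᵥ (modM G *ᵥ y) ≤ algMod G * (y ⬝ᵥ y - 0^2 * n) := hupz
        _ = algMod G * (y ⬝ᵥ y) := by ring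
    set wv : Fin n → ℝ := algMod G • y - modM G *ᵥ y with hwvdef
    clear_value wv
    have hsumwv : ∑ k, wv k = 0 := by
      simp only [hwvdef, Pi.sub_apply, Pi.smul_apply, smul_eq_mul]
      rw [Finset.sum_sub_distrib, ← Finset.mul_sum, hsumy, sum_modM_mulVec G hvolne y]
      ring
    have hWW : wv ⬝ᵥ wv = algMod G * (wv ⬝ᵥ y) - wv ⬝ᵥ (modM G *ᵥ y) := by
      nth_rewrite 2 [hwvdef]
      rw [dotProduct_sub, dotProduct_smul, smul_eq_mul]
    have hq := rayleigh_le G wv hsumwv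
    have hwv0 : wv ⬝ᵥ wv = 0 := by
      by_contra hne0
      have hWpos : 0 < wv ⬝ᵥ wv :=
        lt_of_le_of_ne (Finset.sum_nonneg fun k _ => mul_self_nonneg _) (Ne.symm hne0)
      set q : ℝ := algMod G * (wv ⬝ᵥ wv) - wv ⬝ᵥ (modM G *ᵥ wv) with hqdef
      clear_value q
      have hqnn : 0 ≤ q := by rw [hqdef]; linarith [hq]
      set t : ℝ := -(wv ⬝ᵥ wv)/(q+1) with htdef
      clear_value t
      have hsuma : ∑ k, (y + t • wv) k = 0 := by
        simp only [Pi.add_apply, Pi.smul_apply, smul_eq_mul]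
        rw [Finset.sum_add_distrib, hsumy, ← Finset.mul_sum, hsumwv]
        ring
      have hray := rayleigh_le G (y + t • wv) hsuma
      have hMa : modM G *ᵥ (y + t • wv) = modM G *ᵥ y + t • (modM G *ᵥ wv) := by
        rw [Matrix.mulVec_add, Matrix.mulVec_smul]
      have hyMw : y ⬝ᵥ (modM G *ᵥ wv) = wv ⬝ᵥ (modM G *ᵥ y) :=
        dot_sym _ (modM_symm G) _ _
      have hexp : (y + t • wv) ⬝ᵥ (modM G *ᵥ (y + t • wv))
          = y ⬝ᵥ (modM G *ᵥ y) + 2*t*(wv ⬝ᵥ (modM G *ᵥ y))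
            + t^2 * (wv ⬝ᵥ (modM G *ᵥ wv)) := by
        rw [hMa]
        simp only [add_dotProduct, dotProduct_add, smul_dotProduct, dotProduct_smul,
          smul_eq_mul]
        rw [hyMw]
        ring
      have hna : (y + t • wv) ⬝ᵥ (y + t • wv)
          = y ⬝ᵥ y + 2*t*(wv ⬝ᵥ y) + t^2*(wv ⬝ᵥ wv) := by
        simp only [add_dotProduct, dotProduct_add, smul_dotProduct, dotProduct_smul,
          smul_eq_mul]
        rw [dotProduct_comm y wv]
        ring
      have e1 : algMod G * ((y + t • wv) ⬝ᵥ (y + t • wv))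
          - (y + t • wv) ⬝ᵥ (modM G *ᵥ (y + t • wv))
          = 2*t*(wv ⬝ᵥ wv) + t^2 * q := by
        rw [hexp, hna, hqdef]
        linear_combination -heqy - (2*t)*hWW
      have hkey : 0 ≤ 2*t*(wv ⬝ᵥ wv) + t^2 * q := by linarith [hray, e1]
      have hq1 : 0 < q + 1 := by linarith
      have ht : t < 0 := by
        rw [htdef]
        exact div_neg_of_neg_of_pos (neg_lt_zero.mpr hWpos) hq1
      have hqlt : q/(q+1) < 1 := (div_lt_one hq1).mpr (by linarith)
      have htq : t*q = -((wv ⬝ᵥ wv) * (q/(q+1))) := by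
        rw [htdef]; ring
      have h2W : 0 < 2*(wv ⬝ᵥ wv) + t*q := by
        rw [htq]
        have hm : (wv ⬝ᵥ wv) * (q/(q+1)) < (wv ⬝ᵥ wv) * 1 :=
          mul_lt_mul_of_pos_left hqlt hWpos
        linarith [hm, hWpos]
      have hfact : 2*t*(wv ⬝ᵥ wv) + t^2*q = t*(2*(wv ⬝ᵥ wv) + t*q) := by ring
      have hneg : t*(2*(wv ⬝ᵥ wv) + t*q) < 0 := mul_neg_of_neg_of_pos ht h2W
      linarith [hkey, hfact ▸ hneg]
    have hwz : wv = 0 := dotProduct_self_eq_zero.mp hwv0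
    have weig : modM G *ᵥ y = algMod G • y := by
      rw [hwvdef] at hwz
      exact (sub_eq_zero.mp hwz).symm
    obtain ⟨c, hc⟩ := hsimple y weig
    have hci : c = p₂ := by
      have h := congrFun hc i₀
      rw [hyi₀] at h
      simp only [Pi.smul_apply, smul_eq_mul] at h
      exact (mul_right_cancel₀ (ne_of_gt hi₀) h).symm
    have hcj : c = -p₁ := by
      have h := congrFun hc j₀
      rw [hyj₀] at h
      simp only [Pi.smul_apply, smul_eq_mul] at h
      exact (mul_right_cancel₀ (ne_of_gt hj₀) h).symm
    rw [hci] at hcj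
    linarith
end
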